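/- Let 0 < R < s and R_H = s·ln((s + R)/(s − R)). Define F : (0,1] × (0,2π] → ℝ² by F(η, ζ) = (α·cos ζ, α·sin ζ), where τ = 2s·arsinh(√η·sinh(R_H/(2s))) and α = s·(e^{τ/s} − 1)/(e^{τ/s} + 1). Then the pushforward under F of the product of the uniform probability measures on (0,1] and (0,2π] equals ν_R. (This is the correctness of the Poincaré uniform sampling algorithm: the sampled points are uniformly distributed with respect to hyperbolic area on the disc of Euclidean radius R.) -/

import Mathlib

noncomputable section

open Real MeasureTheory Set
open scoped InnerProductSpace ENNReal NNReal Classical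

/-- Points of the plane `ℝ²`, with the Euclidean inner product and norm. -/
abbrev Pt : Type := EuclideanSpace ℝ (Fin 2)

namespace HypFL

/-- Inverse hyperbolic tangent. -/
def artanh (x : ℝ) : ℝ := (1 / 2) * Real.log ((1 + x) / (1 - x))

/-- The Poincaré disc `B = {x : k‖x‖² < 1}` of curvature `-k`. -/
def disc (k : ℝ) : Set Pt := {x : Pt | k * ‖x‖ ^ 2 < 1}

/-- Möbius addition on the Poincaré disc. -/
def mAdd (k : ℝ) (x y : Pt) : Pt :=
  (1 + 2 * k * ⟪x, y⟫_ℝ + k ^ 2 * ‖x‖ ^ 2 * ‖y‖ ^ 2)⁻¹ •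
    ((1 + 2 * k * ⟪x, y⟫_ℝ + k * ‖y‖ ^ 2) • x + (1 - k * ‖x‖ ^ 2) • y)

/-- Hyperbolic distance on the Poincaré disc. -/
def hdist (k : ℝ) (x y : Pt) : ℝ :=
  (2 / Real.sqrt k) * artanh (Real.sqrt k * ‖mAdd k (-x) y‖)

/-- Logarithmic map at `p`. -/
def logMap (k : ℝ) (p x : Pt) : Pt :=
  if x = p then 0
  else ((((1 - k * ‖p‖ ^ 2) / Real.sqrt k) * artanh (Real.sqrt k * ‖mAdd k (-p) x‖))
      / ‖mAdd k (-p) x‖) • mAdd k (-p) x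

/-- Exponential map at `p`. -/
def expMap (k : ℝ) (p v : Pt) : Pt :=
  if v = 0 then p
  else mAdd k p ((Real.tanh (Real.sqrt k * ‖v‖ / (1 - k * ‖p‖ ^ 2)) / (Real.sqrt k * ‖v‖)) • v)

/-- The geodesic segment `[x, y] = {exp_x (t • log_x y) : t ∈ [0,1]}`. -/
def geoSeg (k : ℝ) (x y : Pt) : Set Pt :=
  (fun t : ℝ => expMap k x (t • logMap k x y)) '' Set.Icc (0 : ℝ) 1

/-- A set is geodesically convex if it contains the geodesic segment between any two
of its points. -/
def GConvex (k : ℝ) (S : Set Pt) : Prop := ∀ x ∈ S, ∀ y ∈ S, geoSeg k x y ⊆ S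

/-- The geodesic convex hull of `D`: the intersection of all geodesically convex subsets
of the Poincaré disc containing `D`. -/
def gconv (k : ℝ) (D : Set Pt) : Set Pt :=
  ⋂₀ {S : Set Pt | S ⊆ disc k ∧ GConvex k S ∧ D ⊆ S}

/-- The set of extreme points of a (finite) set `D`: points `z ∈ D` with
`z ∉ gconv (D \ {z})`. -/
def extremePts (k : ℝ) (D : Set Pt) : Set Pt := {z ∈ D | z ∉ gconv k (D \ {z})}

/-- The `CCW` predicate of the Poincaré Graham scan. -/
def ccw (k : ℝ) (x t z : Pt) : ℝ :=
  (‖logMap k x t‖⁻¹ • logMap k x t) 0 * (‖logMap k x z‖⁻¹ • logMap k x z) 1 -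
    (‖logMap k x t‖⁻¹ • logMap k x t) 1 * (‖logMap k x z‖⁻¹ • logMap k x z) 0

/-- `s = 1/√k`. -/
def sOf (k : ℝ) : ℝ := 1 / Real.sqrt k

end HypFL

namespace HypFL

/-- The hyperbolic area measure on the Poincaré disc: density `4/(1-k‖x‖²)²` with respect
to the two-dimensional Lebesgue measure. -/
def hypArea (k : ℝ) : Measure Pt :=
  volume.withDensity fun x : Pt => ENNReal.ofReal (4 / (1 - k * ‖x‖ ^ 2) ^ 2)

/-- The hyperbolic-uniform probability distribution on the closed Euclidean disc of
radius `R`: the hyperbolic area measure restricted to the disc and normalized. -/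
def nu (k R : ℝ) : Measure Pt :=
  (hypArea k (Metric.closedBall 0 R))⁻¹ • (hypArea k).restrict (Metric.closedBall 0 R)

end HypFL

namespace HypFL

/-- The polar angle of a nonzero point of `ℝ²`, normalized to lie in `(0, 2π]`. -/
def polarAngle (x : Pt) : ℝ :=
  if 0 < Complex.arg ((x 0 : ℂ) + (x 1 : ℂ) * Complex.I) then
    Complex.arg ((x 0 : ℂ) + (x 1 : ℂ) * Complex.I)
  else Complex.arg ((x 0 : ℂ) + (x 1 : ℂ) * Complex.I) + 2 * π

/-- The point of `ℝ²` with Euclidean radius `r` and polar angle `θ`. -/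
def ptPolar (r θ : ℝ) : Pt := WithLp.toLp 2 ![r * Real.cos θ, r * Real.sin θ]

/-- The hyperbolic radius `R_H = s ln((s+R)/(s−R))` corresponding to Euclidean radius `R`. -/
def RH (k R : ℝ) : ℝ := sOf k * Real.log ((sOf k + R) / (sOf k - R))

/-- Number of angular quantization bins: `N_Θ = ⌈4πs sinh(R_H/s)/ε⌉`. -/
def NTheta (k R ε : ℝ) : ℕ := ⌈4 * π * sOf k * Real.sinh (RH k R / sOf k) / ε⌉₊

/-- Number of radial quantization bins: `N_R = ⌈2R_H/ε⌉`. -/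
def NRad (k R ε : ℝ) : ℕ := ⌈2 * RH k R / ε⌉₊

/-- The quantization bin `B(n₁, n₂)`: points whose polar angle lies in
`((n₁−1)·2π/N_Θ, n₁·2π/N_Θ]` and whose hyperbolic distance to the origin lies in
`((n₂−1)·R_H/N_R, n₂·R_H/N_R]`. -/
def qbin (k R ε : ℝ) (n₁ n₂ : ℕ) : Set Pt :=
  {x : Pt |
    polarAngle x ∈ Set.Ioc (((n₁ : ℝ) - 1) * (2 * π / NTheta k R ε))
      ((n₁ : ℝ) * (2 * π / NTheta k R ε)) ∧
    hdist k 0 x ∈ Set.Ioc (((n₂ : ℝ) - 1) * (RH k R / NRad k R ε))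
      ((n₂ : ℝ) * (RH k R / NRad k R ε))}

/-- The Euclidean radius corresponding to hyperbolic radius `h`:
`s(e^{h/s} − 1)/(e^{h/s} + 1)`. -/
def eucOfHyp (k h : ℝ) : ℝ :=
  sOf k * (Real.exp (h / sOf k) - 1) / (Real.exp (h / sOf k) + 1)

/-- The `ε`-Poincaré quantization map `PQ_ε`: each point of the bin `B(n₁, n₂)` is sent to
the bin center, namely the point with polar angle `(n₁ − 1/2)·2π/N_Θ` and hyperbolic
distance `(n₂ − 1/2)·R_H/N_R` from the origin; the origin is fixed. -/
def PQ (k R ε : ℝ) (x : Pt) : Pt :=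
  if x = 0 then 0
  else
    ptPolar
      (eucOfHyp k
        (((⌈hdist k 0 x / (RH k R / NRad k R ε)⌉₊ : ℝ) - 1 / 2) * (RH k R / NRad k R ε)))
      (((⌈polarAngle x / (2 * π / NTheta k R ε)⌉₊ : ℝ) - 1 / 2) * (2 * π / NTheta k R ε))

end HypFL

namespace HypFL

section SamplingAux


lemma tanh_half (x : ℝ) : (exp (2*x) - 1)/(exp (2*x) + 1) = sinh x / cosh x := by
  have h1 : exp (2*x) = exp x * exp x := by rw [two_mul, exp_add]
  have h2 : exp x ≠ 0 := (exp_pos x).ne'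
  have h3 : exp (2*x) + 1 > 0 := by positivity
  have h4 : (0:ℝ) < cosh x := cosh_pos x
  rw [Real.sinh_eq, Real.cosh_eq, Real.exp_neg]
  rw [div_eq_div_iff h3.ne' (by positivity)]
  field_simp [h1]
  rw [h1]; ring

lemma my_prod_smul {α β : Type*} [MeasurableSpace α] [MeasurableSpace β]
    (μ : Measure α) (ν : Measure β) [SFinite μ] [SFinite ν] (c : ℝ≥0∞) (hc : c ≠ ⊤) :
    μ.prod (c • ν) = c • μ.prod ν := by
  ext s hs
  rw [Measure.prod_apply hs, Measure.smul_apply, smul_eq_mul, Measure.prod_apply hs,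
    ← lintegral_const_mul' _ _ hc]
  simp [Measure.smul_apply, smul_eq_mul]

lemma my_map_withDensity {α β : Type*} [MeasurableSpace α] [MeasurableSpace β]
    (μ : Measure α) {f : α → β} (hf : Measurable f) {W : β → ℝ≥0∞} (hW : Measurable W) :
    Measure.map f (μ.withDensity (W ∘ f)) = (Measure.map f μ).withDensity W := by
  ext s hs
  rw [Measure.map_apply hf hs, withDensity_apply _ (hf hs), withDensity_apply _ hs,
    MeasureTheory.setLIntegral_map hs hW hf]
  simp [Function.comp]

variable {k R s a : ℝ}

section G
variable (hs : 0 < s) (ha : 0 < a) (hks : k * s^2 = 1) (hRa : R^2*(1+a) = s^2*a) (hR : 0 < R)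

/-- the radial map -/
def gR (s a η : ℝ) : ℝ := s * √a * √η / √(1 + a*η)

/-- its derivative -/
def dR (s a η : ℝ) : ℝ := s * √a / (2 * √η * ((1 + a*η) * √(1 + a*η)))

include ha in
lemma gR_sq {η : ℝ} (hη : 0 ≤ η) : (gR s a η)^2 = s^2*a*η/(1+a*η) := by
  have h1 : (0:ℝ) < 1 + a*η := by positivity
  rw [gR, div_pow, mul_pow, mul_pow, sq_sqrt hη, sq_sqrt h1.le, sq_sqrt ha.le]

include hs ha in
lemma gR_pos {η : ℝ} (hη : 0 < η) : 0 < gR s a η := by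
  have h1 : (0:ℝ) < 1 + a*η := by positivity
  rw [gR]; positivity

include hs ha in
lemma gR_lt {η₁ η₂ : ℝ} (h1 : 0 < η₁) (h12 : η₁ < η₂) : gR s a η₁ < gR s a η₂ := by
  have p1 : (0:ℝ) < 1 + a*η₁ := by positivity
  have p2 : (0:ℝ) < 1 + a*η₂ := by nlinarith
  have hsq : (gR s a η₁)^2 < (gR s a η₂)^2 := by
    rw [gR_sq ha h1.le, gR_sq ha (h1.trans h12).le, div_lt_div_iff₀ p1 p2]
    nlinarith [mul_pos (mul_pos (pow_pos hs 2) ha) (sub_pos.2 h12)]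
  exact lt_of_pow_lt_pow_left₀ 2 (gR_pos hs ha (h1.trans h12)).le hsq

include hs ha hRa hR in
lemma gR_one : gR s a 1 = R := by
  have h1 : (gR s a 1)^2 = R^2 := by
    rw [gR_sq ha zero_le_one]
    have h2 : (0:ℝ) < 1 + a*1 := by positivity
    field_simp
    nlinarith
  have := gR_pos hs ha (zero_lt_one (α := ℝ))
  nlinarith

include hs ha in
lemma dR_pos {η : ℝ} (hη : 0 < η) : 0 < dR s a η := by
  have h1 : (0:ℝ) < 1 + a*η := by positivity
  rw [dR]; positivity

include hs ha in
lemma gR_hasDeriv {η : ℝ} (hη : 0 < η) : HasDerivAt (gR s a) (dR s a η) η := by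
  have h1 : (0:ℝ) < 1 + a*η := by positivity
  have hx : (0:ℝ) < √η := sqrt_pos.2 hη
  have hy : (0:ℝ) < √(1+a*η) := sqrt_pos.2 h1
  have hnum : HasDerivAt (fun t : ℝ => s * √a * √t) (s * √a * (1/(2*√η))) η :=
    (Real.hasDerivAt_sqrt hη.ne').const_mul (s * √a)
  have hlin : HasDerivAt (fun t : ℝ => 1 + a*t) a η := by
    simpa using ((hasDerivAt_id η).const_mul a).const_add 1
  have hden : HasDerivAt (fun t : ℝ => √(1 + a*t)) (1/(2*√(1+a*η)) * a) η :=
    (Real.hasDerivAt_sqrt h1.ne').comp η hlin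
  have h := hnum.div hden hy.ne'
  refine h.congr_deriv ?_
  symm
  have e1 : √η * √η = η := by rw [← sq]; exact sq_sqrt hη.le
  have e2 : √(1+a*η) * √(1+a*η) = 1+a*η := by rw [← sq]; exact sq_sqrt h1.le
  rw [dR]
  field_simp
  rw [sq_sqrt h1.le, sq_sqrt hη.le]; ring

include hs ha hks in
lemma one_sub_k_gR_sq {η : ℝ} (hη : 0 ≤ η) : 1 - k * (gR s a η)^2 = 1/(1+a*η) := by
  have h1 : (0:ℝ) < 1 + a*η := by positivity
  rw [gR_sq ha hη]
  have hs2 : s^2 ≠ 0 := by positivity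
  field_simp
  nlinarith [hks]

include hs ha hks in
lemma jac_density {η : ℝ} (hη : 0 < η) :
    gR s a η * dR s a η * (4 / (1 - k * (gR s a η)^2)^2) = 2*s^2*a := by
  have h1 : (0:ℝ) < 1 + a*η := by positivity
  have hx : (0:ℝ) < √η := sqrt_pos.2 hη
  have hy : (0:ℝ) < √(1+a*η) := sqrt_pos.2 h1
  rw [one_sub_k_gR_sq hs ha hks hη.le, gR, dR]
  have e1 : √η * √η = η := by rw [← sq]; exact sq_sqrt hη.le
  have e2 : √(1+a*η) * √(1+a*η) = 1+a*η := by rw [← sq]; exact sq_sqrt h1.le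
  have ea : √a * √a = a := by rw [← sq, sq_sqrt ha.le]
  field_simp
  rw [sq_sqrt ha.le, sq_sqrt h1.le]; ring

include hs ha hks hRa hR in
lemma gR_surj {r : ℝ} (hr0 : 0 < r) (hrR : r ≤ R) (hRs : R < s) :
    ∃ η, (0 < η ∧ η ≤ 1) ∧ gR s a η = r := by
  have hsr : (0:ℝ) < s^2 - r^2 := by nlinarith
  refine ⟨r^2/(a*(s^2-r^2)), ⟨by positivity, ?_⟩, ?_⟩
  · rw [div_le_one (by positivity)]
    have hr2R2 : r^2 ≤ R^2 := by nlinarith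
    nlinarith [mul_le_mul_of_nonneg_right hr2R2 (by positivity : (0:ℝ) ≤ 1+a)]
  · set η := r^2/(a*(s^2-r^2)) with hηd
    have hη : 0 < η := by positivity
    have h1 : (0:ℝ) < 1 + a*η := by positivity
    have hsq : (gR s a η)^2 = r^2 := by
      rw [gR_sq ha hη.le, hηd]
      field_simp
      ring
    have := gR_pos hs ha hη
    nlinarith
end G

lemma sOf_pos {k : ℝ} (hk : 0 < k) : 0 < sOf k := by
  rw [sOf]; positivity

lemma k_sOf {k : ℝ} (hk : 0 < k) : k * (sOf k)^2 = 1 := by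
  rw [sOf, div_pow, one_pow, sq_sqrt hk.le]
  field_simp

lemma RH_half {k R : ℝ} (hk : 0 < k) :
    RH k R / (2 * sOf k) = Real.log ((sOf k + R)/(sOf k - R)) / 2 := by
  have hs := sOf_pos hk
  rw [RH]
  field_simp

lemma sinh_RH_pos {k R : ℝ} (hk : 0 < k) (hR : 0 < R) (hRs : R < sOf k) :
    0 < Real.sinh (RH k R / (2 * sOf k)) := by
  have hs := sOf_pos hk
  rw [Real.sinh_pos_iff, RH_half hk]
  have h1 : 1 < (sOf k + R)/(sOf k - R) := by
    rw [lt_div_iff₀ (by linarith)]; linarith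
  have := Real.log_pos h1
  positivity

lemma key_Ra {k R : ℝ} (hk : 0 < k) (hR : 0 < R) (hRs : R < sOf k) :
    R^2 * (1 + (Real.sinh (RH k R / (2 * sOf k)))^2)
      = (sOf k)^2 * (Real.sinh (RH k R / (2 * sOf k)))^2 := by
  have hs := sOf_pos hk
  set s := sOf k
  have hsR : 0 < s - R := by linarith
  have hqpos : 0 < (s + R)/(s - R) := by positivity
  rw [RH_half hk]
  set x := Real.log ((s + R)/(s - R)) / 2 with hx
  have hE2 : exp x * exp x = (s + R)/(s - R) := by
    rw [← exp_add, show x + x = Real.log ((s+R)/(s-R)) by rw [hx]; ring, exp_log hqpos]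
  have hE : exp x ≠ 0 := (exp_pos x).ne'
  have h1 : 1 + sinh x ^ 2 = cosh x ^ 2 := (Real.cosh_sq' x).symm
  rw [h1, Real.sinh_eq, Real.cosh_eq, Real.exp_neg]
  have hEpos : 0 < exp x := exp_pos x
  generalize hgen : exp x = E at hE2 hEpos ⊢
  have hrel : E * E * (s - R) = s + R := by
    rw [hE2]; field_simp
  have hEne : E ≠ 0 := hEpos.ne'
  field_simp
  linear_combination (-((R+s)*(E*E) + R - s)) * hrel

lemma euc_arsinh {k : ℝ} (hk : 0 < k) (u : ℝ) :
    eucOfHyp k (2 * sOf k * Real.arsinh u) = sOf k * u / √(1 + u^2) := by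
  have hs := sOf_pos hk
  rw [eucOfHyp]
  have hdiv : 2 * sOf k * Real.arsinh u / sOf k = 2 * Real.arsinh u := by
    field_simp
  rw [hdiv, mul_div_assoc, mul_div_assoc, tanh_half, Real.sinh_arsinh, Real.cosh_arsinh]


end SamplingAux

set_option maxHeartbeats 2000000 in
/-- correctness of Poincaré uniform sampling. The pushforward under
`F(η, ζ) = (α cos ζ, α sin ζ)`, with `τ = 2s·arsinh(√η·sinh(R_H/(2s)))` and
`α = s(e^{τ/s} − 1)/(e^{τ/s} + 1)`, of the product of the uniform probability measures on
`(0,1]` and `(0,2π]` equals the hyperbolic-uniform distribution `ν_R`. -/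
theorem uniform_sampling_correct (k R : ℝ) (hk : 0 < k) (hR : 0 < R) (hRs : R < sOf k) :
    Measure.map
      (fun p : ℝ × ℝ =>
        ptPolar
          (eucOfHyp k
            (2 * sOf k * Real.arsinh (Real.sqrt p.1 * Real.sinh (RH k R / (2 * sOf k)))))
          p.2)
      ((volume.restrict (Set.Ioc (0 : ℝ) 1)).prod
        ((ENNReal.ofReal (2 * π))⁻¹ • volume.restrict (Set.Ioc (0 : ℝ) (2 * π)))) =
    nu k R := by
  have hs : 0 < sOf k := sOf_pos hk
  have hks : k * (sOf k)^2 = 1 := k_sOf hk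
  have hS : 0 < Real.sinh (RH k R / (2 * sOf k)) := sinh_RH_pos hk hR hRs
  set s : ℝ := sOf k with hsdef
  set S : ℝ := Real.sinh (RH k R / (2 * s)) with hSdef
  set a : ℝ := S^2 with hadef
  have ha : 0 < a := pow_pos hS 2
  have hRa : R^2*(1+a) = s^2*a := key_Ra hk hR hRs
  have hsa : √a = S := sqrt_sq hS.le
  have hπ : (0:ℝ) < π := Real.pi_pos
  have hgeq : ∀ η : ℝ, 0 ≤ η →
      eucOfHyp k (2 * s * Real.arsinh (√η * S)) = gR s a η := by
    intro η hη
    rw [euc_arsinh hk, gR]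
    have h2 : 1 + (√η * S)^2 = 1 + a*η := by
      rw [mul_pow, sq_sqrt hη, hadef]; ring
    rw [h2, hsa]
    ring
  have hgm : Measurable (gR s a) := by
    unfold gR
    exact (continuous_sqrt.measurable.const_mul _).div
      (continuous_sqrt.measurable.comp (measurable_const.add (measurable_id.const_mul a)))
  have hdm : Measurable (dR s a) := by
    unfold dR
    exact measurable_const.div
      ((continuous_sqrt.measurable.const_mul 2).mul
        ((measurable_const.add (measurable_id.const_mul a)).mul
          (continuous_sqrt.measurable.comp (measurable_const.add (measurable_id.const_mul a)))))
  set fmap : ℝ×ℝ → ℝ×ℝ :=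
    fun p => (gR s a p.1 * Real.cos p.2, gR s a p.1 * Real.sin p.2) with hfmapdef
  have hfm : Measurable fmap :=
    ((hgm.comp measurable_fst).mul (Real.continuous_cos.measurable.comp measurable_snd)).prodMk
      ((hgm.comp measurable_fst).mul (Real.continuous_sin.measurable.comp measurable_snd))
  set sset : Set (ℝ×ℝ) := Ioc (0:ℝ) 1 ×ˢ Ioc (0:ℝ) (2*π) with hssetdef
  have hsm : MeasurableSet sset := measurableSet_Ioc.prod measurableSet_Ioc
  set E2 : Set (ℝ×ℝ) := {q : ℝ×ℝ | q.1^2 + q.2^2 ≤ R^2} with hE2def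
  have hE2m : MeasurableSet E2 :=
    measurableSet_le ((measurable_fst.pow_const 2).add (measurable_snd.pow_const 2))
      measurable_const
  set D2 : ℝ×ℝ → ℝ≥0∞ := fun q => ENNReal.ofReal (4/(1-k*(q.1^2+q.2^2))^2) with hD2def
  have hD2m : Measurable D2 :=
    (measurable_const.div ((measurable_const.sub
      (((measurable_fst.pow_const 2).add (measurable_snd.pow_const 2)).const_mul k)).pow_const
        2)).ennreal_ofReal
  set M : ℝ×ℝ → (ℝ×ℝ) →L[ℝ] (ℝ×ℝ) := fun p =>
    LinearMap.toContinuousLinearMap (Matrix.toLin (Module.Basis.finTwoProd ℝ) (Module.Basis.finTwoProd ℝ)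
      !![dR s a p.1 * Real.cos p.2, -(gR s a p.1) * Real.sin p.2;
         dR s a p.1 * Real.sin p.2, gR s a p.1 * Real.cos p.2]) with hMdef
  have hMder : ∀ p ∈ sset, HasFDerivWithinAt fmap (M p) sset p := by
    intro p hp
    have hp1 : 0 < p.1 := hp.1.1
    apply HasFDerivAt.hasFDerivWithinAt
    simp only [hMdef, hfmapdef]
    rw [Matrix.toLin_finTwoProd_toContinuousLinearMap]
    have hg := gR_hasDeriv hs ha hp1
    refine (((hg.comp_hasFDerivAt p hasFDerivAt_fst).mul
        ((Real.hasDerivAt_cos p.2).comp_hasFDerivAt p hasFDerivAt_snd)).prodMk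
        ((hg.comp_hasFDerivAt p hasFDerivAt_fst).mul
        ((Real.hasDerivAt_sin p.2).comp_hasFDerivAt p (hasFDerivAt_snd (𝕜 := ℝ) (p := p))))).congr_fderiv ?_
    symm
    congr 1
    all_goals
      simp [smul_smul, add_comm, neg_mul, smul_neg, neg_smul _ (ContinuousLinearMap.snd ℝ ℝ ℝ),
        mul_comm]
  have hMdet : ∀ p : ℝ×ℝ, (M p).det = gR s a p.1 * dR s a p.1 := by
    intro p
    conv_rhs => rw [← mul_one (gR s a p.1 * dR s a p.1), ← Real.sin_sq_add_cos_sq p.2]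
    simp only [hMdef, LinearMap.det_toContinuousLinearMap, LinearMap.det_toLin,
      Matrix.det_fin_two_of, neg_mul, sub_neg_eq_add]
    ring
  have hinj : Set.InjOn fmap sset := by
    rintro ⟨η₁, ζ₁⟩ ⟨hη₁, hζ₁⟩ ⟨η₂, ζ₂⟩ ⟨hη₂, hζ₂⟩ heq
    simp only [hfmapdef, Prod.mk.injEq] at heq
    obtain ⟨h1, h2⟩ := heq
    have hg1 : 0 < gR s a η₁ := gR_pos hs ha hη₁.1
    have hg2 : 0 < gR s a η₂ := gR_pos hs ha hη₂.1
    have e1 : (gR s a η₁ * Real.cos ζ₁)^2 = (gR s a η₂ * Real.cos ζ₂)^2 := by rw [h1]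
    have e2 : (gR s a η₁ * Real.sin ζ₁)^2 = (gR s a η₂ * Real.sin ζ₂)^2 := by rw [h2]
    have hgg : gR s a η₁ = gR s a η₂ := by
      have hsq : (gR s a η₁)^2 = (gR s a η₂)^2 := by
        linear_combination e1 + e2 - (gR s a η₁)^2 * (Real.sin_sq_add_cos_sq ζ₁)
          + (gR s a η₂)^2 * (Real.sin_sq_add_cos_sq ζ₂)
      nlinarith
    have hηeq : η₁ = η₂ := by
      rcases lt_trichotomy η₁ η₂ with h | h | h
      · exact absurd hgg (gR_lt hs ha hη₁.1 h).ne
      · exact h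
      · exact absurd hgg.symm (gR_lt hs ha hη₂.1 h).ne
    rw [hgg] at h1 h2
    have hcos : Real.cos ζ₁ = Real.cos ζ₂ := mul_left_cancel₀ hg2.ne' h1
    have hsin : Real.sin ζ₁ = Real.sin ζ₂ := mul_left_cancel₀ hg2.ne' h2
    have hang := Real.Angle.cos_sin_inj hcos hsin
    rw [Real.Angle.angle_eq_iff_two_pi_dvd_sub] at hang
    obtain ⟨n, hn⟩ := hang
    have hb1 : ζ₁ - ζ₂ < 2*π := by
      have := hζ₁.2; have := hζ₂.1; linarith
    have hb2 : ζ₂ - ζ₁ < 2*π := by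
      have := hζ₂.2; have := hζ₁.1; linarith
    have hn0 : n = 0 := by
      by_contra hne
      have h1' : (1:ℝ) ≤ |(n:ℝ)| := by
        have : (1:ℤ) ≤ |n| := Int.one_le_abs hne
        exact_mod_cast this
      have : 2*π ≤ |ζ₁ - ζ₂| := by
        rw [hn, abs_mul, abs_of_pos (by positivity : (0:ℝ) < 2*π)]
        nlinarith
      have habslt : |ζ₁ - ζ₂| < 2*π := abs_sub_lt_iff.mpr ⟨hb1, hb2⟩
      linarith
    have hζeq : ζ₁ = ζ₂ := by rw [hn0] at hn; push_cast at hn; linarith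
    exact Prod.ext hηeq hζeq
  have hRone : gR s a 1 = R := gR_one hs ha hRa hR
  have himg : fmap '' sset = E2 \ {(0:ℝ×ℝ)} := by
    ext q
    constructor
    · rintro ⟨⟨η, ζ⟩, ⟨hη, hζ⟩, rfl⟩
      dsimp only at hη hζ
      have hg0 : 0 < gR s a η := gR_pos hs ha hη.1
      have hgle : gR s a η ≤ R := by
        rcases eq_or_lt_of_le hη.2 with h | h
        · rw [h, hRone]
        · exact le_of_lt (hRone ▸ gR_lt hs ha hη.1 h)
      have hsum : (gR s a η * Real.cos ζ)^2 + (gR s a η * Real.sin ζ)^2 = (gR s a η)^2 := by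
        linear_combination (gR s a η)^2 * (Real.sin_sq_add_cos_sq ζ)
      constructor
      · show (gR s a η * Real.cos ζ)^2 + (gR s a η * Real.sin ζ)^2 ≤ R^2
        rw [hsum]; nlinarith
      · intro hmem
        rw [mem_singleton_iff] at hmem
        have hc : gR s a η * Real.cos ζ = 0 := congrArg Prod.fst hmem
        have hsn : gR s a η * Real.sin ζ = 0 := congrArg Prod.snd hmem
        have h1' : Real.cos ζ = 0 := by
          rcases mul_eq_zero.1 hc with h | h
          · exact absurd h hg0.ne'
          · exact h
        have h2' : Real.sin ζ = 0 := by
          rcases mul_eq_zero.1 hsn with h | h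
          · exact absurd h hg0.ne'
          · exact h
        nlinarith [Real.sin_sq_add_cos_sq ζ]
    · rintro ⟨hqE, hq0⟩
      have hq0' : q ≠ 0 := by simpa using hq0
      have hsumpos : 0 < q.1^2 + q.2^2 := by
        rcases lt_or_eq_of_le (by positivity : (0:ℝ) ≤ q.1^2 + q.2^2) with h | h
        · exact h
        · exfalso
          apply hq0'
          have hq1 : q.1 = 0 := by nlinarith [sq_nonneg q.1, sq_nonneg q.2]
          have hq2 : q.2 = 0 := by nlinarith [sq_nonneg q.1, sq_nonneg q.2]
          exact Prod.ext hq1 hq2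
      set r : ℝ := √(q.1^2 + q.2^2) with hrdef
      have hr0 : 0 < r := sqrt_pos.2 hsumpos
      have hr2 : r^2 = q.1^2 + q.2^2 := sq_sqrt hsumpos.le
      have hrR : r ≤ R := by
        rw [hrdef]
        calc √(q.1^2+q.2^2) ≤ √(R^2) := sqrt_le_sqrt hqE
        _ = R := sqrt_sq hR.le
      obtain ⟨η, ⟨hη0, hη1⟩, hgη⟩ := gR_surj hs ha hks hRa hR hr0 hrR hRs
      set z : ℂ := ⟨q.1, q.2⟩ with hzdef
      have hz : z ≠ 0 := by
        intro h
        apply hq0'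
        have h1 : q.1 = 0 := congrArg Complex.re h
        have h2 : q.2 = 0 := congrArg Complex.im h
        exact Prod.ext h1 h2
      have habs : ‖z‖ = r := by
        rw [Complex.norm_def, Complex.normSq_mk]
        rw [hrdef]
        congr 1
        ring
      have hcosarg : Real.cos (Complex.arg z) = q.1 / r := by
        rw [Complex.cos_arg hz, habs]
      have hsinarg : Real.sin (Complex.arg z) = q.2 / r := by
        rw [Complex.sin_arg, habs]
      have harg := Complex.arg_mem_Ioc z
      set θ : ℝ := if 0 < Complex.arg z then Complex.arg z else Complex.arg z + 2*π with hθdef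
      have hθmem : θ ∈ Ioc (0:ℝ) (2*π) := by
        rw [hθdef]
        split_ifs with h
        · exact ⟨h, le_trans harg.2 (by linarith)⟩
        · constructor
          · have := harg.1; linarith [not_lt.mp h]
          · have := not_lt.mp h; linarith
      have hcosθ : Real.cos θ = q.1 / r := by
        rw [hθdef]
        split_ifs with h
        · exact hcosarg
        · rw [Real.cos_add_two_pi]; exact hcosarg
      have hsinθ : Real.sin θ = q.2 / r := by
        rw [hθdef]
        split_ifs with h
        · exact hsinarg
        · rw [Real.sin_add_two_pi]; exact hsinarg
      refine ⟨(η, θ), ⟨⟨hη0, hη1⟩, hθmem⟩, ?_⟩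
      simp only [hfmapdef]
      have hq1 : gR s a η * Real.cos θ = q.1 := by
        rw [hgη, hcosθ]; field_simp
      have hq2 : gR s a η * Real.sin θ = q.2 := by
        rw [hgη, hsinθ]; field_simp
      exact Prod.ext hq1 hq2
  -- pointwise jacobian times density
  have hkey : ∀ p ∈ sset,
      ENNReal.ofReal |(M p).det| *
        ((ENNReal.ofReal (2*s^2*a))⁻¹ * D2 (fmap p)) = 1 := by
    intro p hp
    have hp1 : 0 < p.1 := hp.1.1
    have hg0 : 0 < gR s a p.1 := gR_pos hs ha hp1
    have hd0 : 0 < dR s a p.1 := dR_pos hs ha hp1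
    have hgd : 0 < gR s a p.1 * dR s a p.1 := mul_pos hg0 hd0
    have hsum : (gR s a p.1 * Real.cos p.2)^2 + (gR s a p.1 * Real.sin p.2)^2
        = (gR s a p.1)^2 := by
      linear_combination (gR s a p.1)^2 * (Real.sin_sq_add_cos_sq p.2)
    have hDval : D2 (fmap p) = ENNReal.ofReal (4/(1-k*(gR s a p.1)^2)^2) := by
      simp only [hD2def, hfmapdef]
      rw [hsum]
    rw [hDval, hMdet p, abs_of_pos hgd, mul_left_comm,
      ← ENNReal.ofReal_mul hgd.le, jac_density hs ha hks hp1,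
      ENNReal.inv_mul_cancel (by simp [ENNReal.ofReal_eq_zero]; positivity) ENNReal.ofReal_ne_top]
  -- measure chain on ℝ×ℝ
  set T : Measure (ℝ×ℝ) := volume.restrict sset with hTdef
  set J : ℝ×ℝ → ℝ≥0∞ := fun x => ENNReal.ofReal |(M x).det| with hJdef
  have hJm : Measurable J := by
    have hJeq : J = fun x => ENNReal.ofReal |gR s a x.1 * dR s a x.1| := by
      funext x
      simp only [hJdef]
      rw [hMdet x]
    rw [hJeq]
    exact (((hgm.comp measurable_fst).mul (hdm.comp measurable_fst)).abs).ennreal_ofReal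
  set W : ℝ×ℝ → ℝ≥0∞ := fun q => (ENNReal.ofReal (2*s^2*a))⁻¹ * D2 q with hWdef
  have hWm : Measurable W := hD2m.const_mul _
  have hjac : Measure.map fmap (T.withDensity J) = volume.restrict (fmap '' sset) :=
    map_withDensity_abs_det_fderiv_eq_addHaar volume hsm.nullMeasurableSet hMder hinj
  have hTfac : (T.withDensity J).withDensity (W ∘ fmap) = T := by
    have h1 : (J * (W ∘ fmap)) =ᵐ[T] (1 : ℝ×ℝ → ℝ≥0∞) := by
      rw [hTdef]
      exact (ae_restrict_iff' hsm).2 (ae_of_all _ hkey)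
    rw [← withDensity_mul _ hJm (hWm.comp hfm), withDensity_congr_ae h1, withDensity_one]
  have h0m : (volume : Measure (ℝ×ℝ)) {(0:ℝ×ℝ)} = 0 := by
    have h00 : ({(0:ℝ×ℝ)} : Set (ℝ×ℝ)) = ({(0:ℝ)} : Set ℝ) ×ˢ ({(0:ℝ)} : Set ℝ) :=
      (Set.singleton_prod_singleton).symm
    rw [h00, Measure.volume_eq_prod, Measure.prod_prod, Real.volume_singleton, mul_zero]
  have hEae : (E2 \ {(0:ℝ×ℝ)} : Set (ℝ×ℝ)) =ᵐ[(volume : Measure (ℝ×ℝ))] E2 := by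
    rw [MeasureTheory.ae_eq_set]
    constructor
    · exact measure_mono_null (fun x hx => (hx.2 hx.1.1).elim) h0m
    · refine measure_mono_null (fun x hx => ?_) h0m
      by_contra h
      exact hx.2 ⟨hx.1, h⟩
  have hmapT : Measure.map fmap T = (volume.restrict E2).withDensity W := by
    conv_lhs => rw [← hTfac]
    rw [my_map_withDensity _ hfm hWm, hjac, himg, Measure.restrict_congr_set hEae]
  have h2πne : ENNReal.ofReal (2*π) ≠ 0 := by
    simp only [ne_eq, ENNReal.ofReal_eq_zero, not_le]; positivity
  have hCne : ENNReal.ofReal (2*s^2*a) ≠ 0 := by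
    simp only [ne_eq, ENNReal.ofReal_eq_zero, not_le]; positivity
  have hμ0 : (volume.restrict (Ioc (0:ℝ) 1)).prod
      ((ENNReal.ofReal (2*π))⁻¹ • volume.restrict (Ioc (0:ℝ) (2*π)))
      = (ENNReal.ofReal (2*π))⁻¹ • T := by
    rw [my_prod_smul _ _ _ (ENNReal.inv_ne_top.2 h2πne), Measure.prod_restrict,
      ← Measure.volume_eq_prod]
  have hWsm : W = (ENNReal.ofReal (2*s^2*a))⁻¹ • D2 := rfl
  have hP : Measure.map fmap ((volume.restrict (Ioc (0:ℝ) 1)).prod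
      ((ENNReal.ofReal (2*π))⁻¹ • volume.restrict (Ioc (0:ℝ) (2*π))))
      = (ENNReal.ofReal (2*π) * ENNReal.ofReal (2*s^2*a))⁻¹ •
        (volume.restrict E2).withDensity D2 := by
    rw [hμ0, Measure.map_smul, hmapT, hWsm, withDensity_smul _ hD2m, smul_smul,
      ← ENNReal.mul_inv (Or.inl h2πne) (Or.inl ENNReal.ofReal_ne_top)]
  -- transfer to Pt
  set e : Pt ≃ᵐ ℝ×ℝ :=
    (MeasurableEquiv.toLp 2 (Fin 2 → ℝ)).symm.trans MeasurableEquiv.finTwoArrow with hedef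
  have he : MeasurePreserving e volume volume := by
    have h1 := EuclideanSpace.volume_preserving_symm_measurableEquiv_toLp (Fin 2)
    have h2 := volume_preserving_finTwoArrow ℝ
    exact h2.comp h1
  have hex : ∀ x : Pt, e x = (x 0, x 1) := fun x => rfl
  have hnormsq : ∀ x : Pt, ‖x‖^2 = (x 0)^2 + (x 1)^2 := by
    intro x
    rw [EuclideanSpace.norm_eq, sq_sqrt (by positivity), Fin.sum_univ_two]
    simp [sq_abs]
  have hball : Metric.closedBall (0:Pt) R = e ⁻¹' E2 := by
    ext x
    simp only [Metric.mem_closedBall, dist_zero_right, Set.mem_preimage]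
    constructor
    · intro h
      show (e x).1^2 + (e x).2^2 ≤ R^2
      rw [hex]
      nlinarith [hnormsq x, norm_nonneg x]
    · intro h
      have h' : (x 0)^2 + (x 1)^2 ≤ R^2 := h
      nlinarith [hnormsq x, norm_nonneg x, hR]
  have htrans : Measure.map e ((hypArea k).restrict (Metric.closedBall (0:Pt) R))
      = (volume.restrict E2).withDensity D2 := by
    rw [hypArea, restrict_withDensity measurableSet_closedBall, hball]
    have hfeq : (fun x : Pt => ENNReal.ofReal (4 / (1 - k * ‖x‖ ^ 2) ^ 2))
        = D2 ∘ e := by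
      funext x
      simp only [hD2def, Function.comp_apply]
      rw [hnormsq x]
      rfl
    rw [hfeq, my_map_withDensity _ e.measurable hD2m]
    congr 1
    rw [← Measure.restrict_map e.measurable hE2m, he.map_eq]
  -- identify the mapped function a.e.
  have hae_sset : ∀ᵐ p ∂((volume.restrict (Ioc (0:ℝ) 1)).prod
      ((ENNReal.ofReal (2*π))⁻¹ • volume.restrict (Ioc (0:ℝ) (2*π)))), p ∈ sset := by
    rw [hμ0, hTdef]
    exact Measure.ae_smul_measure (ae_restrict_mem hsm) _
  have hFae : (fun p : ℝ × ℝ =>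
        ptPolar (eucOfHyp k (2 * s * Real.arsinh (Real.sqrt p.1 * S))) p.2)
      =ᵐ[(volume.restrict (Ioc (0:ℝ) 1)).prod
        ((ENNReal.ofReal (2*π))⁻¹ • volume.restrict (Ioc (0:ℝ) (2*π)))]
      (fun p => e.symm (fmap p)) := by
    refine hae_sset.mono fun p hp => ?_
    show ptPolar (eucOfHyp k (2 * s * Real.arsinh (Real.sqrt p.1 * S))) p.2 = e.symm (fmap p)
    have hg := hgeq p.1 hp.1.1.le
    have hEF : e (ptPolar (eucOfHyp k (2 * s * Real.arsinh (Real.sqrt p.1 * S))) p.2)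
        = fmap p := by
      rw [hex]
      refine Prod.ext ?_ ?_
      · show ptPolar (eucOfHyp k (2 * s * Real.arsinh (Real.sqrt p.1 * S))) p.2 0
          = gR s a p.1 * Real.cos p.2
        rw [ptPolar]
        simp only [Matrix.cons_val_zero]
        rw [hg]
      · show ptPolar (eucOfHyp k (2 * s * Real.arsinh (Real.sqrt p.1 * S))) p.2 1
          = gR s a p.1 * Real.sin p.2
        rw [ptPolar]
        simp only [Matrix.cons_val_one, Matrix.head_cons, Matrix.cons_val_zero]
        rw [hg]
    rw [← hEF, MeasurableEquiv.symm_apply_apply]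
  have hmain : Measure.map (fun p : ℝ × ℝ =>
        ptPolar (eucOfHyp k (2 * s * Real.arsinh (Real.sqrt p.1 * S))) p.2)
      ((volume.restrict (Ioc (0:ℝ) 1)).prod
        ((ENNReal.ofReal (2*π))⁻¹ • volume.restrict (Ioc (0:ℝ) (2*π))))
      = (ENNReal.ofReal (2*π) * ENNReal.ofReal (2*s^2*a))⁻¹ •
        (hypArea k).restrict (Metric.closedBall (0:Pt) R) := by
    rw [Measure.map_congr hFae]
    rw [show (fun p : ℝ×ℝ => e.symm (fmap p)) = (⇑e.symm ∘ fmap) from rfl]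
    rw [← Measure.map_map e.symm.measurable hfm, hP, Measure.map_smul, ← htrans,
      MeasurableEquiv.map_symm_map]
  -- total mass computation
  have hμ0univ : ((volume.restrict (Ioc (0:ℝ) 1)).prod
      ((ENNReal.ofReal (2*π))⁻¹ • volume.restrict (Ioc (0:ℝ) (2*π)))) Set.univ = 1 := by
    rw [hμ0, Measure.smul_apply, smul_eq_mul, hTdef, Measure.restrict_apply_univ, hssetdef,
      Measure.volume_eq_prod, Measure.prod_prod, Real.volume_Ioc, Real.volume_Ioc]
    norm_num
    rw [ENNReal.inv_mul_cancel (mul_ne_zero two_ne_zero (ENNReal.ofReal_pos.2 hπ).ne')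
      (ENNReal.mul_ne_top ENNReal.ofNat_ne_top ENNReal.ofReal_ne_top)]
  have haeF : AEMeasurable (fun p : ℝ × ℝ =>
        ptPolar (eucOfHyp k (2 * s * Real.arsinh (Real.sqrt p.1 * S))) p.2)
      ((volume.restrict (Ioc (0:ℝ) 1)).prod
        ((ENNReal.ofReal (2*π))⁻¹ • volume.restrict (Ioc (0:ℝ) (2*π)))) :=
    (e.symm.measurable.comp hfm).aemeasurable.congr hFae.symm
  have hC2ne : ENNReal.ofReal (2*π) * ENNReal.ofReal (2*s^2*a) ≠ 0 :=
    mul_ne_zero h2πne hCne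
  have hC2top : ENNReal.ofReal (2*π) * ENNReal.ofReal (2*s^2*a) ≠ ⊤ :=
    ENNReal.mul_ne_top ENNReal.ofReal_ne_top ENNReal.ofReal_ne_top
  have hmassrel := congrArg (fun m : Measure Pt => m Set.univ) hmain
  simp only [Measure.smul_apply, smul_eq_mul, Measure.restrict_apply_univ] at hmassrel
  rw [Measure.map_apply_of_aemeasurable haeF MeasurableSet.univ, Set.preimage_univ,
    hμ0univ] at hmassrel
  have hmass : hypArea k (Metric.closedBall (0:Pt) R)
      = ENNReal.ofReal (2*π) * ENNReal.ofReal (2*s^2*a) := by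
    calc hypArea k (Metric.closedBall (0:Pt) R)
        = ((ENNReal.ofReal (2*π) * ENNReal.ofReal (2*s^2*a)) *
            (ENNReal.ofReal (2*π) * ENNReal.ofReal (2*s^2*a))⁻¹) *
            hypArea k (Metric.closedBall (0:Pt) R) := by
          rw [ENNReal.mul_inv_cancel hC2ne hC2top, one_mul]
      _ = (ENNReal.ofReal (2*π) * ENNReal.ofReal (2*s^2*a)) *
            ((ENNReal.ofReal (2*π) * ENNReal.ofReal (2*s^2*a))⁻¹ *
            hypArea k (Metric.closedBall (0:Pt) R)) := by ring
      _ = (ENNReal.ofReal (2*π) * ENNReal.ofReal (2*s^2*a)) * 1 := by rw [← hmassrel]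
      _ = ENNReal.ofReal (2*π) * ENNReal.ofReal (2*s^2*a) := mul_one _
  rw [hmain, nu, hmass]

end HypFL
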